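/- Let η_1, ..., η_r be pairwise distinct complex numbers on the unit circle such that at least one quotient η_j/η_r (1 ≤ j < r) is not a root of unity, and let γ_1, ..., γ_{r-1} be nonzero complex numbers. Then for every real d_2 > 1 there exists γ_r ∈ C such that |γ_1 η_1^n + ... + γ_{r-1} η_{r-1}^n + γ_r η_r^n| < d_2^{-n} holds for infinitely many positive integers n. -/

import Mathlib

open Finset Filter

private lemma norm_pow_sub_one_le {x : ℂ} (hx : ‖x‖ = 1) (k : ℕ) :
    ‖x ^ k - 1‖ ≤ k * ‖x - 1‖ := by
  induction k with
  | zero => simp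
  | succ k ih =>
    have h : x ^ (k + 1) - 1 = x ^ k * (x - 1) + (x ^ k - 1) := by ring
    rw [h]
    calc ‖x ^ k * (x - 1) + (x ^ k - 1)‖ ≤ ‖x ^ k * (x - 1)‖ + ‖x ^ k - 1‖ := norm_add_le _ _
      _ ≤ ‖x - 1‖ + k * ‖x - 1‖ := by
          rw [norm_mul, norm_pow, hx, one_pow, one_mul]; linarith
      _ = (↑(k + 1) : ℝ) * ‖x - 1‖ := by push_cast; ring

private lemma recurrence {s : ℕ} (ζ : Fin s → ℂ) (hζ : ∀ i, ‖ζ i‖ = 1) {ε : ℝ} (hε : 0 < ε) :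
    ∃ p, 0 < p ∧ ∀ i, ‖ζ i ^ p - 1‖ < ε := by
  set g : ℕ → (Fin s → ℂ) := fun n i => ζ i ^ n with hg
  have hK : IsCompact (Set.univ.pi fun _ : Fin s => Metric.sphere (0 : ℂ) 1) :=
    isCompact_univ_pi fun _ => isCompact_sphere _ _
  have hmem : ∀ n, g n ∈ Set.univ.pi fun _ : Fin s => Metric.sphere (0 : ℂ) 1 := by
    intro n i _
    simp [hg, mem_sphere_zero_iff_norm, norm_pow, hζ i]
  obtain ⟨L, -, φ, hφ, hconv⟩ := hK.isSeqCompact hmem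
  obtain ⟨N, hN⟩ := (Metric.tendsto_atTop.mp hconv) (ε / 2) (by linarith)
  have hlt : φ N < φ (N + 1) := hφ (Nat.lt_succ_self N)
  refine ⟨φ (N + 1) - φ N, Nat.sub_pos_of_lt hlt, fun i => ?_⟩
  have hdist : dist (g (φ (N + 1))) (g (φ N)) < ε := by
    calc dist (g (φ (N + 1))) (g (φ N)) ≤ dist ((g ∘ φ) (N + 1)) L + dist ((g ∘ φ) N) L :=
          dist_triangle_right _ _ _
      _ < ε / 2 + ε / 2 := add_lt_add (hN _ (Nat.le_succ N)) (hN _ le_rfl)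
      _ = ε := by ring
  have hkey : ζ i ^ (φ (N + 1)) - ζ i ^ (φ N) = ζ i ^ (φ N) * (ζ i ^ (φ (N + 1) - φ N) - 1) := by
    rw [mul_sub, mul_one, ← pow_add, Nat.add_sub_cancel' hlt.le]
  have h1 : ‖ζ i ^ (φ (N + 1) - φ N) - 1‖ = ‖ζ i ^ (φ (N + 1)) - ζ i ^ (φ N)‖ := by
    rw [hkey, norm_mul, norm_pow, hζ i, one_pow, one_mul]
  rw [h1]
  calc ‖ζ i ^ (φ (N + 1)) - ζ i ^ (φ N)‖ = dist (g (φ (N + 1)) i) (g (φ N) i) := by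
        simp [hg, dist_eq_norm]
    _ ≤ dist (g (φ (N + 1))) (g (φ N)) := dist_le_pi_dist _ _ i
    _ < ε := hdist

private lemma recurrence_large {s : ℕ} (ζ : Fin s → ℂ) (hζ : ∀ i, ‖ζ i‖ = 1) {ε : ℝ}
    (hε : 0 < ε) (N : ℕ) : ∃ p, N < p ∧ ∀ i, ‖ζ i ^ p - 1‖ < ε := by
  have hK : (0 : ℝ) < (N : ℝ) + 1 := by positivity
  obtain ⟨p₀, hp₀, hsmall⟩ := recurrence ζ hζ (div_pos hε hK)
  refine ⟨(N + 1) * p₀, ?_, fun i => ?_⟩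
  · calc N < N + 1 := Nat.lt_succ_self N
      _ ≤ (N + 1) * p₀ := Nat.le_mul_of_pos_right _ hp₀
  · have h1 : ζ i ^ ((N + 1) * p₀) = (ζ i ^ p₀) ^ (N + 1) := by rw [← pow_mul, mul_comm]
    have h2 : ‖ζ i ^ p₀‖ = 1 := by rw [norm_pow, hζ i, one_pow]
    calc ‖ζ i ^ ((N + 1) * p₀) - 1‖ = ‖(ζ i ^ p₀) ^ (N + 1) - 1‖ := by rw [h1]
      _ ≤ (N + 1) * ‖ζ i ^ p₀ - 1‖ := by exact_mod_cast norm_pow_sub_one_le h2 (N + 1)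
      _ < (N + 1) * (ε / ((N : ℝ) + 1)) := by
          apply mul_lt_mul_of_pos_left _ (by positivity)
          · push_cast at hsmall ⊢; exact hsmall i
      _ = ε := by push_cast; field_simp

theorem exp_sum_unit_circle_small_values
    (r : ℕ) (hr : 2 ≤ r) (η γ : ℕ → ℂ)
    (hmod : ∀ i < r, ‖η i‖ = 1)
    (hdist : ∀ i < r, ∀ j < r, i ≠ j → η i ≠ η j)
    (hnru : ∃ j < r - 1, ∀ m : ℕ, 0 < m → (η j / η (r - 1)) ^ m ≠ 1)
    (hγ : ∀ i < r - 1, γ i ≠ 0)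
    (d₂ : ℝ) (hd₂ : 1 < d₂) :
    ∃ γr : ℂ,
      {n : ℕ | 0 < n ∧
        ‖(∑ i ∈ Finset.range (r - 1), γ i * η i ^ n) + γr * η (r - 1) ^ n‖
          < (d₂ ^ n)⁻¹}.Infinite := by
  set s := r - 1 with hs
  have hsr : s < r := Nat.sub_lt (by omega) one_pos
  set w : ℂ := η s with hwdef
  have hw : ‖w‖ = 1 := hmod s hsr
  have hw0 : w ≠ 0 := by intro h; rw [h] at hw; simp at hw
  set ζ : Fin s → ℂ := fun i => η i / w with hζdef
  have hζ : ∀ i, ‖ζ i‖ = 1 := by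
    intro i
    rw [hζdef]
    simp only [norm_div, hw, hmod i (lt_trans i.isLt hsr), div_one]
  set f : ℕ → ℂ := fun n => ∑ i ∈ Finset.range s, γ i * (η i / w) ^ n with hf
  set q : ℝ := d₂⁻¹ with hq
  have hq0 : 0 < q := by positivity
  have hq1 : q < 1 := inv_lt_one_of_one_lt₀ hd₂
  set c : ℝ := (1 - q) / 2 with hc
  have hc0 : 0 < c := by rw [hc]; linarith
  set C : ℝ := ∑ i ∈ Finset.range s, ‖γ i‖ with hC
  have hC0 : 0 ≤ C := Finset.sum_nonneg fun i _ => norm_nonneg _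
  -- key step: from any n we can jump
  have key : ∀ n : ℕ, ∃ m, n < m ∧ ‖f m - f n‖ < c * q ^ n := by
    intro n
    have hε : 0 < c * q ^ n / (C + 1) := by positivity
    obtain ⟨p, hp, hsmall⟩ := recurrence_large ζ hζ hε n
    refine ⟨n + p, by omega, ?_⟩
    have hexp : f (n + p) - f n = ∑ i ∈ Finset.range s, γ i * (η i / w) ^ n * ((η i / w) ^ p - 1) := by
      rw [hf]
      rw [← Finset.sum_sub_distrib]
      refine Finset.sum_congr rfl fun i hi => ?_
      rw [pow_add]; ring
    rw [hexp]
    calc ‖∑ i ∈ Finset.range s, γ i * (η i / w) ^ n * ((η i / w) ^ p - 1)‖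
        ≤ ∑ i ∈ Finset.range s, ‖γ i * (η i / w) ^ n * ((η i / w) ^ p - 1)‖ :=
          norm_sum_le _ _
      _ ≤ ∑ i ∈ Finset.range s, ‖γ i‖ * (c * q ^ n / (C + 1)) := by
          refine Finset.sum_le_sum fun i hi => ?_
          have hilt : i < s := Finset.mem_range.mp hi
          have : ‖(η i / w) ^ p - 1‖ ≤ c * q ^ n / (C + 1) := by
            have := hsmall ⟨i, hilt⟩
            simp only [hζdef] at this
            exact this.le
          calc ‖γ i * (η i / w) ^ n * ((η i / w) ^ p - 1)‖
              = ‖γ i‖ * ‖(η i / w) ^ n‖ * ‖(η i / w) ^ p - 1‖ := by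
                rw [norm_mul, norm_mul]
            _ = ‖γ i‖ * ‖(η i / w) ^ p - 1‖ := by
                have := hζ ⟨i, hilt⟩
                simp only [hζdef] at this
                rw [norm_pow, this, one_pow, mul_one]
            _ ≤ ‖γ i‖ * (c * q ^ n / (C + 1)) :=
                mul_le_mul_of_nonneg_left ‹_› (norm_nonneg _)
      _ = C * (c * q ^ n / (C + 1)) := by rw [← Finset.sum_mul]
      _ < c * q ^ n := by
          rw [div_eq_inv_mul]
          have h2 : C * ((C + 1)⁻¹ * (c * q ^ n)) = (C / (C + 1)) * (c * q ^ n) := by ring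
          rw [h2]
          have h3 : C / (C + 1) < 1 := by
            rw [div_lt_one (by linarith)]; linarith
          nlinarith [mul_pos hc0 (pow_pos hq0 n)]
  -- build the sequence
  let u : ℕ → ℕ := fun k => Nat.rec 1 (fun _ prev => (key prev).choose) k
  have hu0 : u 0 = 1 := rfl
  have huS : ∀ k, u (k + 1) = (key (u k)).choose := fun k => rfl
  have humono : StrictMono u := by
    apply strictMono_nat_of_lt_succ
    intro k
    rw [huS k]
    exact (key (u k)).choose_spec.1
  have hubound : ∀ k, ‖f (u (k + 1)) - f (u k)‖ < c * q ^ (u k) := by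
    intro k
    rw [huS k]
    exact (key (u k)).choose_spec.2
  have hupos : ∀ k, 0 < u k := by
    intro k
    calc 0 < 1 := one_pos
      _ = u 0 := hu0.symm
      _ ≤ u k := humono.monotone (Nat.zero_le k)
  have huge : ∀ k t, u k + t ≤ u (k + t) := by
    intro k t
    induction t with
    | zero => simp
    | succ t ih =>
      have h1 : u (k + t) < u (k + t + 1) := humono (lt_add_one (k + t))
      have h2 : u (k + (t + 1)) = u (k + t + 1) := rfl
      omega
  -- geometric sum bound
  have hgeom : ∀ t : ℕ, (∑ j ∈ Finset.range t, q ^ j) ≤ (1 - q)⁻¹ := by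
    intro t
    calc (∑ j ∈ Finset.range t, q ^ j) ≤ ∑' j : ℕ, q ^ j :=
          Summable.sum_le_tsum _ (fun i _ => by positivity)
            (summable_geometric_of_lt_one hq0.le hq1)
      _ = (1 - q)⁻¹ := tsum_geometric_of_lt_one hq0.le hq1
  have hchain : ∀ k t, dist (f (u k)) (f (u (k + t))) ≤ c * q ^ (u k) * ∑ j ∈ Finset.range t, q ^ j := by
    intro k t
    induction t with
    | zero => simp
    | succ t ih =>
      calc dist (f (u k)) (f (u (k + (t + 1))))
          ≤ dist (f (u k)) (f (u (k + t))) + dist (f (u (k + t))) (f (u (k + t + 1))) := by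
            have : k + (t + 1) = k + t + 1 := by ring
            rw [this]
            exact dist_triangle _ _ _
        _ ≤ c * q ^ (u k) * ∑ j ∈ Finset.range t, q ^ j + c * q ^ (u (k + t)) := by
            have hstep : dist (f (u (k + t))) (f (u (k + t + 1))) ≤ c * q ^ (u (k + t)) := by
              rw [dist_comm, dist_eq_norm]
              exact (hubound (k + t)).le
            linarith
        _ ≤ c * q ^ (u k) * ∑ j ∈ Finset.range t, q ^ j + c * (q ^ (u k) * q ^ t) := by
            have h1 : q ^ (u (k + t)) ≤ q ^ (u k + t) :=
              pow_le_pow_of_le_one hq0.le hq1.le (huge k t)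
            rw [pow_add] at h1
            nlinarith
        _ = c * q ^ (u k) * ∑ j ∈ Finset.range (t + 1), q ^ j := by
            rw [Finset.sum_range_succ]; ring
  have hchain2 : ∀ k t, dist (f (u k)) (f (u (k + t))) ≤ q ^ (u k) / 2 := by
    intro k t
    calc dist (f (u k)) (f (u (k + t))) ≤ c * q ^ (u k) * ∑ j ∈ Finset.range t, q ^ j :=
          hchain k t
      _ ≤ c * q ^ (u k) * (1 - q)⁻¹ := by
          apply mul_le_mul_of_nonneg_left (hgeom t) (by positivity)
      _ = q ^ (u k) / 2 := by
          have hne : (1 : ℝ) - q ≠ 0 := by rw [hq]; have := hq1; linarith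
          rw [hc]
          field_simp
  -- Cauchy
  have hcauchy : CauchySeq (fun k => f (u k)) := by
    apply cauchySeq_of_le_tendsto_0 (fun N => q ^ (u N))
    · intro n m N hn hm
      obtain ⟨tn, rfl⟩ := Nat.exists_eq_add_of_le hn
      obtain ⟨tm, rfl⟩ := Nat.exists_eq_add_of_le hm
      calc dist (f (u (N + tn))) (f (u (N + tm)))
          ≤ dist (f (u N)) (f (u (N + tn))) + dist (f (u N)) (f (u (N + tm))) :=
            dist_triangle_left _ _ _
        _ ≤ q ^ (u N) / 2 + q ^ (u N) / 2 := add_le_add (hchain2 N tn) (hchain2 N tm)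
        _ = q ^ (u N) := by ring
    · have h1 : Tendsto (fun N : ℕ => q ^ N) atTop (nhds 0) :=
        tendsto_pow_atTop_nhds_zero_of_lt_one hq0.le hq1
      apply squeeze_zero (fun N => by positivity) (fun N => ?_) h1
      exact pow_le_pow_of_le_one hq0.le hq1.le humono.le_apply
  obtain ⟨L, hL⟩ := cauchySeq_tendsto_of_complete hcauchy
  have hlim : ∀ k, dist (f (u k)) L ≤ q ^ (u k) / 2 := by
    intro k
    have h1 : Tendsto (fun t => f (u (k + t))) atTop (nhds L) := by
      simpa [Function.comp_def, Nat.add_comm] using hL.comp (tendsto_add_atTop_nat k)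
    have h2 : Tendsto (fun t => dist (f (u k)) (f (u (k + t)))) atTop (nhds (dist (f (u k)) L)) :=
      tendsto_const_nhds.dist h1
    exact le_of_tendsto h2 (Filter.Eventually.of_forall fun t => hchain2 k t)
  refine ⟨-L, ?_⟩
  apply Set.infinite_of_injective_forall_mem (f := u) humono.injective
  intro k
  constructor
  · exact hupos k
  · have heq : (∑ i ∈ Finset.range (r - 1), γ i * η i ^ (u k)) + (-L) * w ^ (u k)
        = w ^ (u k) * (f (u k) - L) := by
      rw [hf, mul_sub, Finset.mul_sum]
      have hwn : w ^ (u k) ≠ 0 := pow_ne_zero _ hw0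
      have hsum : ∑ i ∈ Finset.range (r - 1), γ i * η i ^ (u k)
          = ∑ i ∈ Finset.range s, w ^ (u k) * (γ i * (η i / w) ^ (u k)) := by
        refine Finset.sum_congr rfl fun i hi => ?_
        rw [div_pow]
        field_simp
      rw [hsum]
      ring
    rw [heq, norm_mul, norm_pow, hw, one_pow, one_mul]
    have h1 : ‖f (u k) - L‖ ≤ q ^ (u k) / 2 := by
      rw [← dist_eq_norm]; exact hlim k
    have h2 : q ^ (u k) = (d₂ ^ (u k))⁻¹ := by rw [hq, inv_pow]
    have h3 : 0 < q ^ (u k) := pow_pos hq0 _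
    rw [← h2]
    linarith
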